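/- For convex bodies K₁, …, Kₙ of class C²₊ in ℝⁿ and α ∉ {0,1}, with p = n·α/(1-α), one has D_α(P_{K₁} × ⋯ × P_{Kₙ} ‖ Q_{K₁} × ⋯ × Q_{Kₙ}) = (1/(α-1)) · log( as_p(K₁,…,Kₙ) / (n ∏_{i=1}^n |K_i|^{(1-α)/n} |K_i°|^{α/n}) ), where as_p(K₁,…,Kₙ) = ∫_{S^{n-1}} [h_{K₁}(u)^{1-p} f_{K₁}(u) ⋯ h_{Kₙ}(u)^{1-p} f_{Kₙ}(u)]^{1/(n+p)} dσ(u). -/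

import Mathlib

open MeasureTheory Real
open scoped RealInnerProductSpace

/-- A convex body of class `C²₊`. -/
def IsC2PlusBody (n : ℕ) (K : Set (EuclideanSpace ℝ (Fin n))) : Prop :=
  IsCompact K ∧ Convex ℝ K ∧ 0 ∈ interior K ∧
    ∃ N : EuclideanSpace ℝ (Fin n) → EuclideanSpace ℝ (Fin n),
      ContDiffOn ℝ 1 N (frontier K) ∧
      (∀ x ∈ frontier K, ‖N x‖ = 1 ∧ ∀ y ∈ K, ⟪y, N x⟫ ≤ ⟪x, N x⟫) ∧
      Set.InjOn N (frontier K)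

private lemma aux_pt {n : ℕ} (hn : 1 ≤ n) {α p : ℝ} (hα1 : α ≠ 1)
    (hp : p = n * α / (1 - α)) {a b v w : ℝ} (ha : 0 < a) (hb : 0 ≤ b)
    (hv : 0 < v) (hw : 0 < w) :
    (1 / ((n : ℝ) ^ ((1:ℝ)/n) * w ^ ((1:ℝ)/n) * a)) ^ α *
      (b ^ ((1:ℝ)/n) * a ^ ((1:ℝ)/n) / ((n : ℝ) ^ ((1:ℝ)/n) * v ^ ((1:ℝ)/n))) ^ (1 - α)
    = (a ^ (1 - p) * b) ^ ((1 - α)/n) *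
      ((n : ℝ) ^ ((1:ℝ)/n) * (v ^ ((1-α)/n) * w ^ (α/n)))⁻¹ := by
  have hn0 : (n : ℝ) ≠ 0 := Nat.cast_ne_zero.mpr (by omega)
  have hnpos : (0:ℝ) < n := by positivity
  have h1α : (1:ℝ) - α ≠ 0 := sub_ne_zero_of_ne (Ne.symm hα1)
  rcases hb.eq_or_lt with hb0 | hb0
  · rw [← hb0]
    rw [Real.zero_rpow (one_div_ne_zero hn0), zero_mul, zero_div,
      Real.zero_rpow h1α, mul_zero, mul_zero,
      Real.zero_rpow (div_ne_zero h1α hn0), zero_mul]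
  · rw [← Real.exp_log ha, ← Real.exp_log hb0, ← Real.exp_log hnpos,
      ← Real.exp_log hv, ← Real.exp_log hw]
    simp only [one_div, ← Real.exp_mul, ← Real.exp_neg, ← Real.exp_add, ← Real.exp_sub,
      mul_comm]
    rw [Real.exp_eq_exp]
    simp only [Real.exp_neg, Real.exp_log hnpos]
    field_simp [hp]
    subst hp; field_simp; ring

theorem renyi_eq_mixed_p_affine {n : ℕ} (hn : 1 ≤ n)
    (K : Fin n → Set (EuclideanSpace ℝ (Fin n)))
    (hK : ∀ i, IsC2PlusBody n (K i))
    -- support functions and curvature functions of the bodies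
    (h f : Fin n → EuclideanSpace ℝ (Fin n) → ℝ)
    (hh : ∀ i, ∀ u ∈ Metric.sphere (0 : EuclideanSpace ℝ (Fin n)) 1, 0 < h i u)
    (hf : ∀ i, ∀ u ∈ Metric.sphere (0 : EuclideanSpace ℝ (Fin n)) 1, 0 ≤ f i u)
    (VK VKp : Fin n → ℝ) (hVK : ∀ i, VK i = (volume (K i)).toReal)
    (hVKp : ∀ i, VKp i =
      (volume {y : EuclideanSpace ℝ (Fin n) | ∀ x ∈ K i, ⟪x, y⟫ ≤ 1}).toReal)
    (α : ℝ) (hα0 : α ≠ 0) (hα1 : α ≠ 1) (p : ℝ) (hp : p = n * α / (1 - α)) :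
    (1 / (α - 1)) * Real.log (∫ u in Metric.sphere (0 : EuclideanSpace ℝ (Fin n)) 1,
        ∏ i, ((1 / ((n : ℝ) ^ ((1 : ℝ) / n) * VKp i ^ ((1 : ℝ) / n) * h i u)) ^ α *
          (f i u ^ ((1 : ℝ) / n) * h i u ^ ((1 : ℝ) / n) /
            ((n : ℝ) ^ ((1 : ℝ) / n) * VK i ^ ((1 : ℝ) / n))) ^ (1 - α)) ∂μH[(n : ℝ) - 1])
      = (1 / (α - 1)) *
        Real.log ((∫ u in Metric.sphere (0 : EuclideanSpace ℝ (Fin n)) 1,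
            (∏ i, h i u ^ (1 - p) * f i u) ^ (1 / ((n : ℝ) + p)) ∂μH[(n : ℝ) - 1]) /
          (n * ∏ i, VK i ^ ((1 - α) / n) * VKp i ^ (α / n))) := by
  have hn0 : (n : ℝ) ≠ 0 := Nat.cast_ne_zero.mpr (by omega)
  have hnpos : (0:ℝ) < n := by positivity
  have h1α : (1:ℝ) - α ≠ 0 := sub_ne_zero_of_ne (Ne.symm hα1)
  -- positivity of volumes
  have hVKpos : ∀ i, 0 < VK i := by
    intro i
    rw [hVK]
    have hpos : 0 < volume (K i) :=
      lt_of_lt_of_le (isOpen_interior.measure_pos volume ⟨0, (hK i).2.2.1⟩)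
        (measure_mono interior_subset)
    exact ENNReal.toReal_pos hpos.ne' (hK i).1.measure_lt_top.ne
  have hVKppos : ∀ i, 0 < VKp i := by
    intro i
    rw [hVKp]
    obtain ⟨R, hR⟩ := (hK i).1.isBounded.subset_closedBall 0
    set R' : ℝ := max R 1 with hR'
    have hR'pos : 0 < R' := lt_of_lt_of_le one_pos (le_max_right _ _)
    have hKR : K i ⊆ Metric.closedBall 0 R' :=
      hR.trans (Metric.closedBall_subset_closedBall (le_max_left _ _))
    have hlow : Metric.closedBall (0 : EuclideanSpace ℝ (Fin n)) R'⁻¹ ⊆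
        {y : EuclideanSpace ℝ (Fin n) | ∀ x ∈ K i, ⟪x, y⟫ ≤ 1} := by
      intro y hy x hx
      have hy' : ‖y‖ ≤ R'⁻¹ := by simpa using hy
      have hx' : ‖x‖ ≤ R' := by simpa using hKR hx
      calc ⟪x, y⟫ ≤ ‖x‖ * ‖y‖ := real_inner_le_norm x y
        _ ≤ R' * R'⁻¹ := by
            exact mul_le_mul hx' hy' (norm_nonneg _) hR'pos.le
        _ = 1 := mul_inv_cancel₀ hR'pos.ne'
    obtain ⟨ε, hε, hball⟩ := Metric.mem_nhds_iff.mp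
      (mem_interior_iff_mem_nhds.mp (hK i).2.2.1)
    have hup : {y : EuclideanSpace ℝ (Fin n) | ∀ x ∈ K i, ⟪x, y⟫ ≤ 1} ⊆
        Metric.closedBall 0 (2 / ε) := by
      intro y hy
      simp only [Metric.mem_closedBall, dist_zero_right]
      by_cases hy0 : y = 0
      · simp [hy0]; positivity
      · have hynorm : 0 < ‖y‖ := norm_pos_iff.mpr hy0
        set x : EuclideanSpace ℝ (Fin n) := (ε / 2 * ‖y‖⁻¹) • y with hxdef
        have hxball : x ∈ Metric.ball (0 : EuclideanSpace ℝ (Fin n)) ε := by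
          simp only [Metric.mem_ball, dist_zero_right, hxdef, norm_smul]
          rw [Real.norm_eq_abs, abs_of_pos (by positivity)]
          rw [mul_assoc, inv_mul_cancel₀ hynorm.ne', mul_one]
          linarith
        have hineq := hy x (hball hxball)
        rw [hxdef, real_inner_smul_left, real_inner_self_eq_norm_sq] at hineq
        have : ε / 2 * ‖y‖ ≤ 1 := by
          calc ε / 2 * ‖y‖ = ε / 2 * ‖y‖⁻¹ * (‖y‖ ^ 2) := by
                field_simp
            _ ≤ 1 := hineq
        rw [le_div_iff₀ hε]
        nlinarith
    have hpos : 0 < volume {y : EuclideanSpace ℝ (Fin n) | ∀ x ∈ K i, ⟪x, y⟫ ≤ 1} :=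
      lt_of_lt_of_le
        (lt_of_lt_of_le (Metric.measure_ball_pos volume 0 (inv_pos.mpr hR'pos))
          (measure_mono Metric.ball_subset_closedBall))
        (measure_mono hlow)
    have hfin : volume {y : EuclideanSpace ℝ (Fin n) | ∀ x ∈ K i, ⟪x, y⟫ ≤ 1} < ⊤ :=
      lt_of_le_of_lt (measure_mono hup) (measure_closedBall_lt_top)
    exact ENNReal.toReal_pos hpos.ne' hfin.ne
  -- exponent identity
  have hnp : (n : ℝ) + p = n / (1 - α) := by
    rw [hp]; field_simp; ring
  have he : 1 / ((n : ℝ) + p) = (1 - α) / n := by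
    rw [hnp, one_div_div]
  -- product of constants
  have hconst : ∏ i : Fin n, ((n : ℝ) ^ ((1:ℝ)/n) *
        (VK i ^ ((1-α)/n) * VKp i ^ (α/n)))⁻¹
      = ((n : ℝ) * ∏ i : Fin n, VK i ^ ((1-α)/n) * VKp i ^ (α/n))⁻¹ := by
    rw [Finset.prod_inv_distrib, Finset.prod_mul_distrib, Finset.prod_const,
      Finset.card_univ, Fintype.card_fin, ← Real.rpow_natCast ((n:ℝ)^((1:ℝ)/n)) n,
      ← Real.rpow_mul hnpos.le, one_div, inv_mul_cancel₀ hn0, Real.rpow_one]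
  have key : ∀ u ∈ Metric.sphere (0 : EuclideanSpace ℝ (Fin n)) 1,
      (∏ i, ((1 / ((n : ℝ) ^ ((1 : ℝ) / n) * VKp i ^ ((1 : ℝ) / n) * h i u)) ^ α *
          (f i u ^ ((1 : ℝ) / n) * h i u ^ ((1 : ℝ) / n) /
            ((n : ℝ) ^ ((1 : ℝ) / n) * VK i ^ ((1 : ℝ) / n))) ^ (1 - α)))
      = (∏ i, h i u ^ (1 - p) * f i u) ^ (1 / ((n : ℝ) + p)) *
        ((n : ℝ) * ∏ i, VK i ^ ((1 - α) / n) * VKp i ^ (α / n))⁻¹ := by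
    intro u hu
    rw [he, ← Real.finset_prod_rpow _ _
        (fun i _ => mul_nonneg (Real.rpow_nonneg (hh i u hu).le _) (hf i u hu)) _,
      ← hconst, ← Finset.prod_mul_distrib]
    exact Finset.prod_congr rfl fun i _ =>
      aux_pt hn hα1 hp (hh i u hu) (hf i u hu) (hVKpos i) (hVKppos i)
  rw [MeasureTheory.setIntegral_congr_fun Metric.isClosed_sphere.measurableSet key,
    MeasureTheory.integral_mul_const]
  simp only [div_eq_mul_inv]
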